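/- For every multi-index $\beta \in \mathbb{N}_0^3$ with $|\beta| \ge 2$, there exist nonnegative constants $c_{\alpha,1}, c_{\alpha,2}, c_{\alpha,3}$ indexed by multi-indices $\alpha \in \mathbb{N}_0^3$ with $\alpha_j \le \beta_j$ and $|\alpha| \ge 2$, such that for all $(x_1, x_2)$ in the open reference triangle $T = \{0 < x_1, x_2,\ x_1 + x_2 < 1\}$, $\frac{1}{x_1^{\beta_1} x_2^{\beta_2} (1-x_1-x_2)^{\beta_3}} = \sum_{\alpha} \left( \frac{c_{\alpha,1}}{x_1^{\alpha_1} x_2^{\alpha_2}} + \frac{c_{\alpha,2}}{x_1^{\alpha_1} (1-x_1-x_2)^{\alpha_3}} + \frac{c_{\alpha,3}}{x_2^{\alpha_2} (1-x_1-x_2)^{\alpha_3}} \right)$. -/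

import Mathlib

open scoped Classical in
private lemma sum_extend (β' β : Fin 3 → ℕ) (hle : β' ≤ β)
    (c : (Fin 3 → ℕ) → Fin 3 → ℝ) (d0 d1 d2 : (Fin 3 → ℕ) → ℝ) :
    ∑ α ∈ (Finset.Icc 0 β).filter (fun α => 2 ≤ α 0 + α 1 + α 2),
      ((if α ≤ β' then c α 0 else 0) / d0 α + (if α ≤ β' then c α 1 else 0) / d1 α
        + (if α ≤ β' then c α 2 else 0) / d2 α) =
    ∑ α ∈ (Finset.Icc 0 β').filter (fun α => 2 ≤ α 0 + α 1 + α 2),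
      (c α 0 / d0 α + c α 1 / d1 α + c α 2 / d2 α) := by
  have hsub : (Finset.Icc 0 β').filter (fun α => 2 ≤ α 0 + α 1 + α 2) ⊆
      (Finset.Icc 0 β).filter (fun α => 2 ≤ α 0 + α 1 + α 2) := by
    intro α hα
    simp only [Finset.mem_filter, Finset.mem_Icc] at hα ⊢
    exact ⟨⟨hα.1.1, le_trans hα.1.2 hle⟩, hα.2⟩
  have hz : ∀ α ∈ (Finset.Icc 0 β).filter (fun α => 2 ≤ α 0 + α 1 + α 2),
      α ∉ (Finset.Icc 0 β').filter (fun α => 2 ≤ α 0 + α 1 + α 2) →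
      ((if α ≤ β' then c α 0 else 0) / d0 α + (if α ≤ β' then c α 1 else 0) / d1 α
        + (if α ≤ β' then c α 2 else 0) / d2 α) = 0 := by
    intro α hα hα'
    simp only [Finset.mem_filter, Finset.mem_Icc] at hα hα'
    have hn : ¬ α ≤ β' := fun h => hα' ⟨⟨hα.1.1, h⟩, hα.2⟩
    simp [hn]
  rw [← Finset.sum_subset hsub hz]
  apply Finset.sum_congr rfl
  intro α hα
  simp only [Finset.mem_filter, Finset.mem_Icc] at hα
  rw [if_pos hα.1.2, if_pos hα.1.2, if_pos hα.1.2]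

private lemma stmt4_aux : ∀ n : ℕ, ∀ β : Fin 3 → ℕ, β 0 + β 1 + β 2 = n →
    2 ≤ β 0 + β 1 + β 2 →
    ∃ c : (Fin 3 → ℕ) → Fin 3 → ℝ, (∀ α j, 0 ≤ c α j) ∧
      ∀ x1 x2 : ℝ, 0 < x1 → 0 < x2 → x1 + x2 < 1 →
        1 / (x1 ^ β 0 * x2 ^ β 1 * (1 - x1 - x2) ^ β 2) =
          ∑ α ∈ (Finset.Icc 0 β).filter (fun α => 2 ≤ α 0 + α 1 + α 2),
            (c α 0 / (x1 ^ α 0 * x2 ^ α 1) +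
              c α 1 / (x1 ^ α 0 * (1 - x1 - x2) ^ α 2) +
              c α 2 / (x2 ^ α 1 * (1 - x1 - x2) ^ α 2)) := by
  intro n
  induction n using Nat.strong_induction_on with
  | _ n ih =>
    intro β hβn hβ
    classical
    have hβmem : β ∈ (Finset.Icc 0 β).filter (fun α => 2 ≤ α 0 + α 1 + α 2) := by
      simp only [Finset.mem_filter, Finset.mem_Icc]
      exact ⟨⟨zero_le, le_refl _⟩, hβ⟩
    by_cases h0 : β 0 = 0 ∨ β 1 = 0 ∨ β 2 = 0
    · -- base cases: c is supported at α = β, with one j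
      obtain ⟨j, hj⟩ : ∃ j : Fin 3, (j = 0 → β 2 = 0) ∧ (j = 1 → β 1 = 0) ∧ (j = 2 → β 0 = 0) := by
        rcases h0 with h | h | h
        · exact ⟨2, by simp [h]⟩
        · exact ⟨1, by simp [h]⟩
        · exact ⟨0, by simp [h]⟩
      refine ⟨fun α i => if α = β ∧ i = j then 1 else 0, ?_, ?_⟩
      · intro α i; dsimp only; split <;> norm_num
      · intro x1 x2 hx1 hx2 hx3
        have hs : (0:ℝ) < 1 - x1 - x2 := by linarith
        rw [Finset.sum_eq_single_of_mem β hβmem]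
        · fin_cases j
          · have h2 : β 2 = 0 := hj.1 rfl
            simp [h2]
          · have h1 : β 1 = 0 := hj.2.1 rfl
            simp [h1, Fin.ext_iff]
          · have h00 : β 0 = 0 := hj.2.2 rfl
            simp [h00, Fin.ext_iff]
        · intro α _ hne
          simp [hne]
    · push_neg at h0
      obtain ⟨hb0, hb1, hb2⟩ := h0
      obtain ⟨b0, e0⟩ := Nat.exists_eq_succ_of_ne_zero hb0
      obtain ⟨b1, e1⟩ := Nat.exists_eq_succ_of_ne_zero hb1
      obtain ⟨b2, e2⟩ := Nat.exists_eq_succ_of_ne_zero hb2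
      set βa : Fin 3 → ℕ := ![β 0, β 1, b2] with hβa
      set βb : Fin 3 → ℕ := ![β 0, b1, β 2] with hβb
      set βc : Fin 3 → ℕ := ![b0, β 1, β 2] with hβc
      have ha0 : βa 0 = β 0 := rfl
      have ha1 : βa 1 = β 1 := rfl
      have ha2 : βa 2 = b2 := rfl
      have hb0' : βb 0 = β 0 := rfl
      have hb1' : βb 1 = b1 := rfl
      have hb2' : βb 2 = β 2 := rfl
      have hc0 : βc 0 = b0 := rfl
      have hc1 : βc 1 = β 1 := rfl
      have hc2 : βc 2 = β 2 := rfl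
      have hlea : βa ≤ β := by intro i; fin_cases i <;> simp [βa] <;> omega
      have hleb : βb ≤ β := by intro i; fin_cases i <;> simp [βb] <;> omega
      have hlec : βc ≤ β := by intro i; fin_cases i <;> simp [βc] <;> omega
      have hna : βa 0 + βa 1 + βa 2 = n - 1 := by
        rw [ha0, ha1, ha2]; omega
      have hnb : βb 0 + βb 1 + βb 2 = n - 1 := by
        rw [hb0', hb1', hb2']; omega
      have hnc : βc 0 + βc 1 + βc 2 = n - 1 := by
        rw [hc0, hc1, hc2]; omega
      have hn3 : 3 ≤ n := by omega
      have hlt : n - 1 < n := by omega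
      obtain ⟨ca, hca0, hca⟩ := ih (n - 1) hlt βa hna (by omega)
      obtain ⟨cb, hcb0, hcb⟩ := ih (n - 1) hlt βb hnb (by omega)
      obtain ⟨cc, hcc0, hcc⟩ := ih (n - 1) hlt βc hnc (by omega)
      refine ⟨fun α j => (if α ≤ βa then ca α j else 0) + (if α ≤ βb then cb α j else 0)
          + (if α ≤ βc then cc α j else 0), ?_, ?_⟩
      · intro α j
        have : ∀ (p : Prop) [Decidable p] (r : ℝ), 0 ≤ r → 0 ≤ if p then r else 0 := by
          intro p _ r hr; split <;> simp [hr]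
        have h1 := this (α ≤ βa) (ca α j) (hca0 α j)
        have h2 := this (α ≤ βb) (cb α j) (hcb0 α j)
        have h3 := this (α ≤ βc) (cc α j) (hcc0 α j)
        dsimp only
        linarith
      · intro x1 x2 hx1 hx2 hx3
        have hs : (0:ℝ) < 1 - x1 - x2 := by linarith
        have key : 1 / (x1 ^ β 0 * x2 ^ β 1 * (1 - x1 - x2) ^ β 2) =
            1 / (x1 ^ βa 0 * x2 ^ βa 1 * (1 - x1 - x2) ^ βa 2)
            + 1 / (x1 ^ βb 0 * x2 ^ βb 1 * (1 - x1 - x2) ^ βb 2)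
            + 1 / (x1 ^ βc 0 * x2 ^ βc 1 * (1 - x1 - x2) ^ βc 2) := by
          rw [ha0, ha1, ha2, hb0', hb1', hb2', hc0, hc1, hc2, e0, e1, e2]
          simp only [Nat.succ_eq_add_one]
          field_simp
          ring
        rw [key, hca x1 x2 hx1 hx2 hx3, hcb x1 x2 hx1 hx2 hx3, hcc x1 x2 hx1 hx2 hx3,
          ← sum_extend βa β hlea ca (fun α => x1 ^ α 0 * x2 ^ α 1)
            (fun α => x1 ^ α 0 * (1 - x1 - x2) ^ α 2) (fun α => x2 ^ α 1 * (1 - x1 - x2) ^ α 2),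
          ← sum_extend βb β hleb cb (fun α => x1 ^ α 0 * x2 ^ α 1)
            (fun α => x1 ^ α 0 * (1 - x1 - x2) ^ α 2) (fun α => x2 ^ α 1 * (1 - x1 - x2) ^ α 2),
          ← sum_extend βc β hlec cc (fun α => x1 ^ α 0 * x2 ^ α 1)
            (fun α => x1 ^ α 0 * (1 - x1 - x2) ^ α 2) (fun α => x2 ^ α 1 * (1 - x1 - x2) ^ α 2),
          ← Finset.sum_add_distrib, ← Finset.sum_add_distrib]
        apply Finset.sum_congr rfl
        intro α _
        ring

/-- Partial fraction decomposition of `1/(ω₁^β₁ ω₂^β₂ ω₃^β₃)` on the reference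
triangle, where `ω₁ = x₁`, `ω₂ = x₂`, `ω₃ = 1 - x₁ - x₂`: there exist nonnegative
constants `c_{α,j}`, indexed by multi-indices `α ≤ β` with `|α| ≥ 2`, realizing
the two-factor decomposition. -/
theorem stmt4 (β : Fin 3 → ℕ) (hβ : 2 ≤ β 0 + β 1 + β 2) :
    ∃ c : (Fin 3 → ℕ) → Fin 3 → ℝ, (∀ α j, 0 ≤ c α j) ∧
      ∀ x1 x2 : ℝ, 0 < x1 → 0 < x2 → x1 + x2 < 1 →
        1 / (x1 ^ β 0 * x2 ^ β 1 * (1 - x1 - x2) ^ β 2) =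
          ∑ α ∈ (Finset.Icc 0 β).filter (fun α => 2 ≤ α 0 + α 1 + α 2),
            (c α 0 / (x1 ^ α 0 * x2 ^ α 1) +
              c α 1 / (x1 ^ α 0 * (1 - x1 - x2) ^ α 2) +
              c α 2 / (x2 ^ α 1 * (1 - x1 - x2) ^ α 2)) := by
  exact stmt4_aux (β 0 + β 1 + β 2) β rfl hβ
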